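/- Let d ≥ 1 and let ψ : Fin d² → ℂᵈ be unit vectors satisfying |⟨ψ_ξ, ψ_ζ⟩|² = (d·δ_{ξζ} + 1)/(d + 1) for all ξ, ζ. Then for every d×d Hermitian complex matrix A, ∑_ξ (⟨ψ_ξ, A ψ_ξ⟩)² = d·(tr(A²) + (tr A)²)/(d + 1), where each ⟨ψ_ξ, A ψ_ξ⟩ is a real number. -/

import Mathlib

open Matrix
open scoped BigOperators

namespace SIC6

variable {n : Type*} [Fintype n] [DecidableEq n]

lemma vmv_mul (a b c f : n → ℂ) :
    vecMulVec a b * vecMulVec c f = (b ⬝ᵥ c) • vecMulVec a f := by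
  ext i j
  simp only [Matrix.mul_apply, vecMulVec_apply, dotProduct, smul_eq_mul,
    Matrix.smul_apply]
  rw [Finset.sum_mul]
  exact Finset.sum_congr rfl fun k _ => by ring

lemma eq_zero_of_trace_mul_self (M : Matrix n n ℂ) (hM : Mᴴ = M)
    (h : (M * M).trace = 0) : M = 0 := by
  have h' : (Mᴴ * M).trace = 0 := by rw [hM]; exact h
  have h1 : (Mᴴ * M).trace = ((∑ j, ∑ i, Complex.normSq (M i j) : ℝ) : ℂ) := by
    push_cast
    simp only [Matrix.trace, Matrix.mul_apply, Matrix.conjTranspose_apply,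
      Matrix.diag_apply]
    refine Finset.sum_congr rfl fun j _ => Finset.sum_congr rfl fun i _ => ?_
    rw [Complex.normSq_eq_conj_mul_self]; rfl
  rw [h1] at h'
  have h2 : (∑ j, ∑ i, Complex.normSq (M i j) : ℝ) = 0 := by exact_mod_cast h'
  ext i j
  have h3 : ∀ j ∈ Finset.univ, (0:ℝ) ≤ ∑ i, Complex.normSq (M i j) :=
    fun j _ => Finset.sum_nonneg fun i _ => Complex.normSq_nonneg _
  have h4 := (Finset.sum_eq_zero_iff_of_nonneg h3).mp h2 j (Finset.mem_univ j)
  have h5 := (Finset.sum_eq_zero_iff_of_nonneg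
    (fun i _ => Complex.normSq_nonneg (M i j))).mp h4 i (Finset.mem_univ i)
  simpa using Complex.normSq_eq_zero.mp h5

def vv (d : ℕ) (ψ : Fin (d ^ 2) → Fin d → ℂ) (ξ : Fin (d ^ 2)) :
    Fin d × Fin d → ℂ :=
  fun p => (starRingEnd ℂ) (ψ ξ p.1) * ψ ξ p.2

def ee (d : ℕ) : Fin d × Fin d → ℂ := fun p => if p.1 = p.2 then 1 else 0

section dots

variable (d : ℕ) (ψ : Fin (d ^ 2) → Fin d → ℂ)

lemma star_ee : star (ee d) = ee d := by
  funext p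
  simp only [Pi.star_apply, ee]
  split_ifs <;> simp

lemma dot_vv (ξ ζ : Fin (d ^ 2)) : star (vv d ψ ξ) ⬝ᵥ vv d ψ ζ
    = (starRingEnd ℂ) (star (ψ ξ) ⬝ᵥ ψ ζ) * (star (ψ ξ) ⬝ᵥ ψ ζ) := by
  simp only [dotProduct, vv, Pi.star_apply, star_mul', star_star, map_sum, _root_.map_mul,
    starRingEnd_apply, Fintype.sum_prod_type, Fintype.sum_mul_sum]
  refine Finset.sum_congr rfl fun i _ => Finset.sum_congr rfl fun j _ => by ring

lemma dot_ve (hunit : ∀ ξ, star (ψ ξ) ⬝ᵥ ψ ξ = 1) (ξ : Fin (d ^ 2)) :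
    vv d ψ ξ ⬝ᵥ ee d = 1 := by
  have h := hunit ξ
  simp only [dotProduct, Pi.star_apply, starRingEnd_apply] at h ⊢
  simp only [vv, ee, Fintype.sum_prod_type, mul_ite, mul_one, mul_zero,
    Finset.sum_ite_eq, Finset.mem_univ, if_true, starRingEnd_apply]
  exact h

lemma dot_sve (hunit : ∀ ξ, star (ψ ξ) ⬝ᵥ ψ ξ = 1) (ξ : Fin (d ^ 2)) :
    star (vv d ψ ξ) ⬝ᵥ ee d = 1 := by
  have h := hunit ξ
  simp only [dotProduct, Pi.star_apply, starRingEnd_apply] at h ⊢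
  simp only [vv, ee, Pi.star_apply, star_mul', star_star, mul_ite, mul_one, mul_zero,
    Fintype.sum_prod_type, Finset.sum_ite_eq, Finset.mem_univ, if_true,
    starRingEnd_apply]
  rw [← h]
  exact Finset.sum_congr rfl fun i _ => mul_comm _ _

lemma dot_ee : ee d ⬝ᵥ ee d = (d : ℂ) := by
  simp only [dotProduct, ee, Fintype.sum_prod_type, mul_ite, mul_one, mul_zero,
    ite_mul, zero_mul, one_mul, Finset.sum_ite_eq, Finset.mem_univ, if_true]
  simp

end dots

section key

variable (d : ℕ) (ψ : Fin (d ^ 2) → Fin d → ℂ)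

lemma key (hunit : ∀ ξ, star (ψ ξ) ⬝ᵥ ψ ξ = 1)
    (hsic : ∀ ξ ζ, ‖star (ψ ξ) ⬝ᵥ ψ ζ‖ ^ 2 =
      ((d : ℝ) * (if ξ = ζ then 1 else 0) + 1) / (d + 1)) :
    (∑ ξ, vecMulVec (vv d ψ ξ) (star (vv d ψ ξ)))
      = ((d : ℂ) / (d + 1)) • (vecMulVec (ee d) (ee d) + 1) := by
  have hd1 : (d : ℂ) + 1 ≠ 0 := by
    have : ((d + 1 : ℕ) : ℂ) ≠ 0 := Nat.cast_ne_zero.mpr (Nat.succ_ne_zero d)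
    simpa using this
  -- the Gram overlaps
  have hg : ∀ ξ ζ, (starRingEnd ℂ) (star (ψ ξ) ⬝ᵥ ψ ζ) * (star (ψ ξ) ⬝ᵥ ψ ζ)
      = ((d : ℂ) * (if ξ = ζ then 1 else 0) + 1) / ((d : ℂ) + 1) := by
    intro ξ ζ
    have h := hsic ξ ζ
    rw [mul_comm, Complex.mul_conj']
    rw [show ((‖star (ψ ξ) ⬝ᵥ ψ ζ‖ : ℂ)) ^ 2 = ((‖star (ψ ξ) ⬝ᵥ ψ ζ‖ ^ 2 : ℝ) : ℂ) by
      push_cast; ring]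
    rw [h]
    push_cast [apply_ite (fun x : ℝ => (x : ℂ))]
    simp
  set T : Matrix (Fin d × Fin d) (Fin d × Fin d) ℂ :=
    ∑ ξ, vecMulVec (vv d ψ ξ) (star (vv d ψ ξ)) with hTdef
  set E : Matrix (Fin d × Fin d) (Fin d × Fin d) ℂ :=
    vecMulVec (ee d) (ee d) with hEdef
  set c : ℂ := (d : ℂ) / (d + 1) with hcdef
  have hcs : star c = c := by
    rw [hcdef]
    simp [star_div₀, star_natCast]
  set M : Matrix (Fin d × Fin d) (Fin d × Fin d) ℂ := T - c • (E + 1) with hMdef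
  have hMH : Mᴴ = M := by
    have hvmvH : ∀ (a : Fin d × Fin d → ℂ), (vecMulVec a (star a))ᴴ = vecMulVec a (star a) := by
      intro a
      ext i j
      simp [conjTranspose_apply, vecMulVec_apply, mul_comm]
    have hTH : Tᴴ = T := by
      rw [hTdef, conjTranspose_sum]
      exact Finset.sum_congr rfl fun ξ _ => hvmvH _
    have hEH : Eᴴ = E := by
      rw [hEdef]
      ext i j
      simp only [conjTranspose_apply, vecMulVec_apply, ee, star_mul']
      split_ifs <;> simp [mul_comm]
    rw [hMdef, conjTranspose_sub, conjTranspose_smul, conjTranspose_add,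
      conjTranspose_one, hTH, hEH, hcs]
  -- traces
  have htrvmv : ∀ (a b : Fin d × Fin d → ℂ), (vecMulVec a b).trace = a ⬝ᵥ b := by
    intro a b
    simp [Matrix.trace, vecMulVec_apply, dotProduct, Matrix.diag]
  have hTT : (T * T).trace = (2 * (d : ℂ) ^ 4 + 2 * (d : ℂ) ^ 3) / ((d : ℂ) + 1) ^ 2 := by
    rw [hTdef, Finset.sum_mul_sum]
    simp only [trace_sum]
    have hpt : ∀ ξ ζ : Fin (d ^ 2),
        (vecMulVec (vv d ψ ξ) (star (vv d ψ ξ)) *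
          vecMulVec (vv d ψ ζ) (star (vv d ψ ζ))).trace
        = ((d : ℂ) ^ 2 + 2 * d) / ((d : ℂ) + 1) ^ 2 * (if ξ = ζ then 1 else 0)
          + 1 / ((d : ℂ) + 1) ^ 2 := by
      intro ξ ζ
      rw [vmv_mul, trace_smul, htrvmv, smul_eq_mul,
        dotProduct_comm (vv d ψ ξ) (star (vv d ψ ζ)), dot_vv, dot_vv, hg, hg]
      by_cases h : ξ = ζ
      · subst h
        simp only [if_pos rfl]
        field_simp
        simp only [↓reduceIte]
        ring
      · simp only [if_neg h, if_neg (Ne.symm h)]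
        field_simp
        ring
    simp only [hpt, Finset.sum_add_distrib, mul_ite, mul_one, mul_zero,
      Finset.sum_ite_eq, Finset.mem_univ, if_true, Finset.sum_const,
      Finset.card_univ, Fintype.card_fin, nsmul_eq_mul]
    push_cast
    field_simp
    ring
  have hTE : (T * E).trace = (d : ℂ) ^ 2 := by
    rw [hTdef, hEdef, Finset.sum_mul]
    simp only [trace_sum]
    have hpt : ∀ ξ : Fin (d ^ 2),
        (vecMulVec (vv d ψ ξ) (star (vv d ψ ξ)) * vecMulVec (ee d) (ee d)).trace = 1 := by
      intro ξ
      rw [vmv_mul, trace_smul, htrvmv, smul_eq_mul, dot_sve d ψ hunit,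
        dot_ve d ψ hunit]
      simp
    simp only [hpt, Finset.sum_const, Finset.card_univ, Fintype.card_fin,
      nsmul_eq_mul, mul_one]
    push_cast
    ring
  have hET : (E * T).trace = (d : ℂ) ^ 2 := by
    rw [hTdef, hEdef, Finset.mul_sum]
    simp only [trace_sum]
    have hpt : ∀ ξ : Fin (d ^ 2),
        (vecMulVec (ee d) (ee d) * vecMulVec (vv d ψ ξ) (star (vv d ψ ξ))).trace = 1 := by
      intro ξ
      rw [vmv_mul, trace_smul, htrvmv, smul_eq_mul,
        dotProduct_comm (ee d) (vv d ψ ξ), dot_ve d ψ hunit,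
        dotProduct_comm (ee d) (star (vv d ψ ξ)), dot_sve d ψ hunit]
      simp
    simp only [hpt, Finset.sum_const, Finset.card_univ, Fintype.card_fin,
      nsmul_eq_mul, mul_one]
    push_cast
    ring
  have hT : T.trace = (d : ℂ) ^ 2 := by
    rw [hTdef, trace_sum]
    have hpt : ∀ ξ : Fin (d ^ 2),
        (vecMulVec (vv d ψ ξ) (star (vv d ψ ξ))).trace = 1 := by
      intro ξ
      rw [htrvmv, dotProduct_comm, dot_vv, hg]
      simp only [if_pos rfl, mul_one, if_true]
      exact div_self hd1
    simp only [hpt, Finset.sum_const, Finset.card_univ, Fintype.card_fin,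
      nsmul_eq_mul, mul_one]
    push_cast
    ring
  have hEE : (E * E).trace = (d : ℂ) ^ 2 := by
    rw [hEdef, vmv_mul, trace_smul, htrvmv, smul_eq_mul, dot_ee]
    ring
  have hE : E.trace = (d : ℂ) := by
    rw [hEdef, htrvmv]
    exact dot_ee d
  have h1 : (1 : Matrix (Fin d × Fin d) (Fin d × Fin d) ℂ).trace = (d : ℂ) ^ 2 := by
    rw [trace_one]
    simp [Fintype.card_prod]
    ring
  have hMM : (M * M).trace = 0 := by
    rw [hMdef]
    simp only [Matrix.sub_mul, Matrix.mul_sub, Matrix.smul_mul, Matrix.mul_smul,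
      Matrix.add_mul, Matrix.mul_add, Matrix.mul_one, Matrix.one_mul,
      trace_sub, trace_add, trace_smul, smul_eq_mul, smul_smul]
    rw [hTT, hTE, hET, hT, hEE, hE, h1, hcdef]
    field_simp
    ring
  have hM0 : M = 0 := eq_zero_of_trace_mul_self M hMH hMM
  have := sub_eq_zero.mp hM0
  rw [hTdef] at this
  exact this

end key

end SIC6

/-- SIC 2-design identity: if `ψ` is a family of `d²` unit vectors with
`|⟨ψ ξ, ψ ζ⟩|² = (d δ_{ξζ} + 1)/(d+1)`, then for every Hermitian `A`,
`∑ ξ, ⟨ψ ξ, A ψ ξ⟩² = d (tr(A²) + (tr A)²)/(d+1)`, each `⟨ψ ξ, A ψ ξ⟩`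
being real. -/
theorem stmt_6 (d : ℕ) (hd : 1 ≤ d) (ψ : Fin (d ^ 2) → Fin d → ℂ)
    (hunit : ∀ ξ, star (ψ ξ) ⬝ᵥ ψ ξ = 1)
    (hsic : ∀ ξ ζ, ‖star (ψ ξ) ⬝ᵥ ψ ζ‖ ^ 2 =
      ((d : ℝ) * (if ξ = ζ then 1 else 0) + 1) / (d + 1)) :
    ∀ A : Matrix (Fin d) (Fin d) ℂ, A.IsHermitian →
      (∀ ξ, (star (ψ ξ) ⬝ᵥ (A *ᵥ ψ ξ)).im = 0) ∧
      ∑ ξ, (star (ψ ξ) ⬝ᵥ (A *ᵥ ψ ξ)) ^ 2 =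
        (d : ℂ) * ((A * A).trace + A.trace ^ 2) / (d + 1) := by
  intro A hA
  have hd1 : (d : ℂ) + 1 ≠ 0 := by
    have : ((d + 1 : ℕ) : ℂ) ≠ 0 := Nat.cast_ne_zero.mpr (Nat.succ_ne_zero d)
    simpa using this
  constructor
  · intro ξ
    have hz : star (star (ψ ξ) ⬝ᵥ (A *ᵥ ψ ξ)) = star (ψ ξ) ⬝ᵥ (A *ᵥ ψ ξ) := by
      rw [← star_dotProduct_star, star_mulVec, star_star, hA.eq,
        ← Matrix.dotProduct_mulVec]
    exact Complex.conj_eq_iff_im.mp hz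
  · have hW : ∀ p q : Fin d × Fin d,
        ∑ ξ, SIC6.vv d ψ ξ p * SIC6.vv d ψ ξ q
        = (d : ℂ) / (d + 1) * (SIC6.ee d p * SIC6.ee d (q.2, q.1)
            + if p = (q.2, q.1) then 1 else 0) := by
      intro p q
      have h1 := congrFun (congrFun (SIC6.key d ψ hunit hsic) p) (q.2, q.1)
      simp only [Matrix.sum_apply, vecMulVec_apply, Matrix.smul_apply,
        Matrix.add_apply, Matrix.one_apply, Pi.star_apply, smul_eq_mul] at h1
      rw [← h1]
      refine Finset.sum_congr rfl fun ξ _ => ?_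
      simp only [SIC6.vv, star_mul', star_star, starRingEnd_apply]
      ring
    have ha : ∀ ξ, star (ψ ξ) ⬝ᵥ (A *ᵥ ψ ξ)
        = ∑ p : Fin d × Fin d, A p.1 p.2 * SIC6.vv d ψ ξ p := by
      intro ξ
      simp only [dotProduct, mulVec, Pi.star_apply, SIC6.vv, Fintype.sum_prod_type,
        starRingEnd_apply, Finset.mul_sum]
      refine Finset.sum_congr rfl fun i _ => Finset.sum_congr rfl fun j _ => by ring
    have hS1 : ∑ p : Fin d × Fin d, A p.1 p.2 * SIC6.ee d p = A.trace := by
      simp [SIC6.ee, Fintype.sum_prod_type, mul_ite, mul_one, mul_zero,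
        Finset.sum_ite_eq, Matrix.trace, Matrix.diag]
    have hS1' : ∑ q : Fin d × Fin d, A q.1 q.2 * SIC6.ee d (q.2, q.1) = A.trace := by
      simp only [SIC6.ee]
      simp [Fintype.sum_prod_type, mul_ite, mul_one, mul_zero, eq_comm,
        Finset.sum_ite_eq, Matrix.trace, Matrix.diag]
    have hS2 : ∑ p : Fin d × Fin d, ∑ q : Fin d × Fin d,
        (A p.1 p.2 * A q.1 q.2) * (if p = (q.2, q.1) then 1 else 0)
        = (A * A).trace := by
      have hcond : ∀ p q : Fin d × Fin d, (p = (q.2, q.1)) = (q = (p.2, p.1)) := by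
        intro p q
        apply propext
        constructor <;> intro h <;> subst h <;> rfl
      simp only [hcond]
      have hout : ∀ p : Fin d × Fin d, ∑ q : Fin d × Fin d,
          (A p.1 p.2 * A q.1 q.2) * (if q = (p.2, p.1) then 1 else 0)
          = A p.1 p.2 * A p.2 p.1 := by
        intro p
        rw [Finset.sum_eq_single ((p.2, p.1) : Fin d × Fin d)]
        · simp
        · intro q _ hq
          simp [hq]
        · intro h
          exact absurd (Finset.mem_univ _) h
      simp only [hout]
      simp [Matrix.trace, Matrix.diag, Matrix.mul_apply, Fintype.sum_prod_type]
    calc ∑ ξ, (star (ψ ξ) ⬝ᵥ (A *ᵥ ψ ξ)) ^ 2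
        = ∑ ξ, ∑ p : Fin d × Fin d, ∑ q : Fin d × Fin d,
            (A p.1 p.2 * A q.1 q.2) * (SIC6.vv d ψ ξ p * SIC6.vv d ψ ξ q) := by
          refine Finset.sum_congr rfl fun ξ _ => ?_
          rw [ha ξ, sq, Fintype.sum_mul_sum]
          exact Finset.sum_congr rfl fun p _ =>
            Finset.sum_congr rfl fun q _ => by ring
      _ = ∑ p : Fin d × Fin d, ∑ q : Fin d × Fin d,
            (A p.1 p.2 * A q.1 q.2) * ∑ ξ, SIC6.vv d ψ ξ p * SIC6.vv d ψ ξ q := by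
          rw [Finset.sum_comm]
          refine Finset.sum_congr rfl fun p _ => ?_
          rw [Finset.sum_comm]
          exact Finset.sum_congr rfl fun q _ => (Finset.mul_sum _ _ _).symm
      _ = (d : ℂ) / (d + 1) * ((∑ p : Fin d × Fin d, A p.1 p.2 * SIC6.ee d p) *
            (∑ q : Fin d × Fin d, A q.1 q.2 * SIC6.ee d (q.2, q.1)))
          + (d : ℂ) / (d + 1) * (∑ p : Fin d × Fin d, ∑ q : Fin d × Fin d,
              (A p.1 p.2 * A q.1 q.2) * (if p = (q.2, q.1) then 1 else 0)) := by
          rw [Fintype.sum_mul_sum, Finset.mul_sum, Finset.mul_sum,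
            ← Finset.sum_add_distrib]
          refine Finset.sum_congr rfl fun p _ => ?_
          rw [Finset.mul_sum, Finset.mul_sum, ← Finset.sum_add_distrib]
          refine Finset.sum_congr rfl fun q _ => ?_
          rw [hW p q]
          ring
      _ = (d : ℂ) * ((A * A).trace + A.trace ^ 2) / (d + 1) := by
          rw [hS1, hS1', hS2]
          field_simp
          ring
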